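/- arXiv:0903.5344 — 3 statements merged into one kernel-verified Lean document; each statement's English description precedes it below -/
import Mathlib

section
/- Let ν > 0, α ∈ (0,2], and let Σ be a positive definite n×n real matrix. If S is an ℝⁿ-valued random variable with characteristic function t ↦ exp(-(tᵀΣt)^(α/2)) and U is an independent Gamma(ν,1) random variable (density u^(ν-1)e^(-u)/Γ(ν) on [0,∞)), then the random vector X = U^(1/α)·S has characteristic function t ↦ (1 + (tᵀΣt)^(α/2))^(-ν). -/
open MeasureTheory ProbabilityTheory Complex Real
open scoped ENNReal NNReal

/-- The characteristic function of a random vector in ℝⁿ. -/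
noncomputable def charFunOf {Ω : Type*} [MeasureSpace Ω] {n : ℕ}
    (X : Ω → EuclideanSpace ℝ (Fin n)) (t : EuclideanSpace ℝ (Fin n)) : ℂ :=
  ∫ ω, Complex.exp (Complex.I * (inner ℝ t (X ω) : ℝ))

set_option maxHeartbeats 1000000 in
theorem stmt_0 {Ω : Type*} [MeasureSpace Ω] [IsProbabilityMeasure (ℙ : Measure Ω)]
    {n : ℕ} (α ν : ℝ) (hα : α ∈ Set.Ioc (0:ℝ) 2) (hν : 0 < ν)
    (M : Matrix (Fin n) (Fin n) ℝ) (hM : M.PosDef)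
    (S : Ω → EuclideanSpace ℝ (Fin n)) (U : Ω → ℝ)
    (hSmeas : Measurable S) (hUmeas : Measurable U)
    (hindep : IndepFun U S)
    (hS : ∀ t : EuclideanSpace ℝ (Fin n),
      charFunOf S t = Complex.exp (-((∑ i, ∑ j, t i * M i j * t j) ^ (α / 2) : ℝ)))
    (hU : Measure.map U ℙ = volume.withDensity
      (fun u => ENNReal.ofReal
        (if 0 ≤ u then u ^ (ν - 1) * Real.exp (-u) / Real.Gamma ν else 0))) :
    ∀ t : EuclideanSpace ℝ (Fin n),
      charFunOf (fun ω => (U ω) ^ (1 / α) • S ω) t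
        = (1 + (((∑ i, ∑ j, t i * M i j * t j : ℝ) ^ (α / 2) : ℝ) : ℂ)) ^ (-ν : ℂ) := by
  obtain ⟨hα0, hα2⟩ := hα
  intro t
  set q : ℝ := ∑ i, ∑ j, t i * M i j * t j with hq
  have hq0 : 0 ≤ q := by
    have h := hM.posSemidef.dotProduct_mulVec_nonneg (WithLp.ofLp t)
    simpa [dotProduct, Matrix.mulVec, Finset.mul_sum, mul_assoc, hq] using h
  set c : ℝ := q ^ (α / 2) with hc
  have hc0 : 0 ≤ c := Real.rpow_nonneg hq0 _
  -- the integrand as a function of the pair (u, s)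
  set g : ℝ × EuclideanSpace ℝ (Fin n) → ℂ :=
    fun p => Complex.exp (Complex.I * ((p.1 ^ (1 / α) * inner ℝ t p.2 : ℝ) : ℂ)) with hg
  have hinner : Continuous fun s : EuclideanSpace ℝ (Fin n) => (inner ℝ t s : ℝ) :=
    continuous_const.inner continuous_id
  have hgmeas : Measurable g := by
    apply Complex.measurable_exp.comp
    apply Measurable.const_mul
    apply Complex.measurable_ofReal.comp
    exact (measurable_fst.pow_const _).mul (hinner.measurable.comp measurable_snd)
  have hgnorm : ∀ p, ‖g p‖ = 1 := by
    intro p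
    simp [hg, Complex.norm_exp, mul_comm]
  -- rewrite the characteristic function as an integral against the joint law
  have step1 : charFunOf (fun ω => (U ω) ^ (1 / α) • S ω) t
      = ∫ p, g p ∂((ℙ : Measure Ω).map (fun ω => (U ω, S ω))) := by
    rw [charFunOf, integral_map (hUmeas.prodMk hSmeas).aemeasurable
      hgmeas.aestronglyMeasurable]
    congr 1
    funext ω
    simp only [hg]
    rw [real_inner_smul_right]
  have hmap : (ℙ : Measure Ω).map (fun ω => (U ω, S ω))
      = ((ℙ : Measure Ω).map U).prod ((ℙ : Measure Ω).map S) :=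
    (indepFun_iff_map_prod_eq_prod_map_map hUmeas.aemeasurable
      hSmeas.aemeasurable).mp hindep
  have : IsProbabilityMeasure ((ℙ : Measure Ω).map U) :=
    Measure.isProbabilityMeasure_map hUmeas.aemeasurable
  have : IsProbabilityMeasure ((ℙ : Measure Ω).map S) :=
    Measure.isProbabilityMeasure_map hSmeas.aemeasurable
  have hgint : Integrable g (((ℙ : Measure Ω).map U).prod ((ℙ : Measure Ω).map S)) := by
    refine (integrable_const (1 : ℝ)).mono' hgmeas.aestronglyMeasurable ?_
    filter_upwards with p using le_of_eq (hgnorm p)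
  -- inner integral: characteristic function of S
  have hinnerint : ∀ u : ℝ, ∫ s, g (u, s) ∂((ℙ : Measure Ω).map S)
      = Complex.exp (-(((u ^ (1 / α)) ^ 2 * q) ^ (α / 2) : ℝ)) := by
    intro u
    have h1 : ∫ s, g (u, s) ∂((ℙ : Measure Ω).map S)
        = charFunOf S (u ^ (1 / α) • t) := by
      have hm2 : Measurable fun s : EuclideanSpace ℝ (Fin n) =>
          Complex.exp (Complex.I * ((u ^ (1 / α) * inner ℝ t s : ℝ) : ℂ)) :=
        Complex.measurable_exp.comp
          ((Complex.measurable_ofReal.comp (hinner.measurable.const_mul _)).const_mul _)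
      rw [charFunOf, integral_map hSmeas.aemeasurable hm2.aestronglyMeasurable]
      congr 1
      funext ω
      rw [real_inner_smul_left]
    rw [h1, hS]
    have hsum : (∑ i, ∑ j, (u ^ (1 / α) • t) i * M i j * (u ^ (1 / α) • t) j)
        = (u ^ (1 / α)) ^ 2 * q := by
      rw [hq, Finset.mul_sum]
      refine Finset.sum_congr rfl fun i _ => ?_
      rw [Finset.mul_sum]
      refine Finset.sum_congr rfl fun j _ => ?_
      simp only [PiLp.smul_apply, smul_eq_mul]
      ring
    rw [hsum]
  have step2 : charFunOf (fun ω => (U ω) ^ (1 / α) • S ω) t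
      = ∫ u, Complex.exp (-(((u ^ (1 / α)) ^ 2 * q) ^ (α / 2) : ℝ))
          ∂((ℙ : Measure Ω).map U) := by
    rw [step1, hmap, integral_prod _ hgint]
    exact integral_congr_ae (Filter.Eventually.of_forall fun u => hinnerint u)
  rw [step2, hU]
  -- now compute the integral against the Gamma density
  set d : ℝ → ℝ := fun u => if 0 ≤ u then u ^ (ν - 1) * Real.exp (-u) / Real.Gamma ν else 0
    with hd
  have hd0 : ∀ u, 0 ≤ d u := by
    intro u
    rw [hd]
    dsimp only
    split
    · positivity
    · exact le_refl 0
  have hdmeas : Measurable d := by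
    apply Measurable.ite measurableSet_Ici
    · fun_prop
    · exact measurable_const
  have hwd : (volume.withDensity fun u => ENNReal.ofReal (d u))
      = volume.withDensity fun u => ((d u).toNNReal : ℝ≥0∞) := rfl
  rw [hwd, integral_withDensity_eq_integral_smul hdmeas.real_toNNReal]
  have key : ∀ᵐ u : ℝ, (d u).toNNReal • Complex.exp (-(((u ^ (1 / α)) ^ 2 * q) ^ (α / 2) : ℝ))
      = ((Set.Ioi (0:ℝ)).indicator
          (fun u => ((u ^ (ν - 1) * Real.exp (-((1 + c) * u)) / Real.Gamma ν : ℝ) : ℂ)) u) := by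
    have h0 : ∀ᵐ u : ℝ, u ≠ 0 := by
      refine ae_iff.mpr ?_
      simp [Real.volume_singleton]
    filter_upwards [h0] with u hu
    rcases lt_trichotomy u 0 with hlt | heq | hgt
    · rw [Set.indicator_of_notMem (fun h => hlt.asymm (Set.mem_Ioi.mp h))]
      have : d u = 0 := by rw [hd]; simp [not_le.mpr hlt]
      simp [this]
    · exact absurd heq hu
    · rw [Set.indicator_of_mem (Set.mem_Ioi.mpr hgt)]
      have hupos : (0:ℝ) < u := hgt
      have hpow : ((u ^ (1 / α)) ^ 2 * q) ^ (α / 2) = u * c := by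
        have h1 : (u ^ (1 / α)) ^ 2 = u ^ (2 / α) := by
          rw [← Real.rpow_natCast (u ^ (1/α)) 2, ← Real.rpow_mul hupos.le]
          congr 1
          push_cast
          ring
        rw [h1, Real.mul_rpow (Real.rpow_nonneg hupos.le _) hq0,
          ← Real.rpow_mul hupos.le]
        have : 2 / α * (α / 2) = 1 := by field_simp
        rw [this, Real.rpow_one, hc]
      rw [hpow]
      have hdu : d u = u ^ (ν - 1) * Real.exp (-u) / Real.Gamma ν := by
        rw [hd]; simp [hupos.le]
      rw [NNReal.smul_def, Real.coe_toNNReal _ (hd0 u), hdu]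
      rw [show Real.exp (-((1 + c) * u)) = Real.exp (-u) * Real.exp (-(u * c)) by
        rw [← Real.exp_add]; congr 1; ring]
      rw [Complex.real_smul, ← Complex.ofReal_neg, ← Complex.ofReal_exp, ← Complex.ofReal_mul]
      norm_cast
      ring
  rw [integral_congr_ae key, integral_indicator measurableSet_Ioi]
  have : ∫ u in Set.Ioi (0:ℝ),
      ((u ^ (ν - 1) * Real.exp (-((1 + c) * u)) / Real.Gamma ν : ℝ) : ℂ)
      = ((∫ u in Set.Ioi (0:ℝ), u ^ (ν - 1) * Real.exp (-((1 + c) * u)) / Real.Gamma ν : ℝ) : ℂ) :=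
    integral_ofReal
  rw [this]
  have hreal : (∫ u in Set.Ioi (0:ℝ), u ^ (ν - 1) * Real.exp (-((1 + c) * u)) / Real.Gamma ν)
      = (1 + c) ^ (-ν) := by
    simp_rw [div_eq_mul_inv, integral_mul_const]
    rw [integral_rpow_mul_exp_neg_mul_Ioi hν (by positivity : (0:ℝ) < 1 + c)]
    rw [mul_assoc, mul_inv_cancel₀ (Real.Gamma_pos_of_pos hν).ne', mul_one,
      one_div, Real.inv_rpow (by positivity), ← Real.rpow_neg (by positivity)]
  rw [hreal, Complex.ofReal_cpow (by positivity : (0:ℝ) ≤ 1 + c)]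
  push_cast
  rfl
end

section
/- Let α ∈ (0,2), ν > 0, N a positive integer, and r > 0, u > 0. Define R_N(r,u) implicitly by (1 + e^(iπα/2) r^(-α) u^α)^(-ν) = Σ_{j=0}^{N-1} ((-1)^j/j!)·(Γ(ν+j)/Γ(ν))·e^(iπαj/2) r^(-αj) u^(αj) + R_N(r,u). Then |R_N(r,u)| ≤ (Γ(N+ν)/(N! Γ(ν) sin^(ν+N)(πα/2))) · r^(-αN) u^(αN). -/
open Real Complex Finset
open scoped ContDiff

private lemma taylor_norm_bound {E : Type*} [NormedAddCommGroup E] [NormedSpace ℝ E] [CompleteSpace E] :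
    ∀ (N : ℕ) (f : ℝ → E) (t C : ℝ), ContDiff ℝ ∞ f → 0 ≤ t →
    (∀ s ∈ Set.Icc (0:ℝ) t, ‖iteratedDeriv N f s‖ ≤ C) →
    ‖f t - ∑ j ∈ Finset.range N, (t ^ j / (j.factorial : ℝ)) • iteratedDeriv j f 0‖
      ≤ C * t ^ N / N.factorial := by
  intro N
  induction N with
  | zero =>
    intro f t C hf ht hC
    simpa using hC t ⟨ht, le_refl t⟩
  | succ N ih =>
    intro f t C hf ht hC
    have hfd : Differentiable ℝ f := hf.differentiable (by norm_num)
    have hf' : ContDiff ℝ ∞ (deriv f) := (contDiff_infty_iff_deriv.mp hf).2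
    have hder : ∀ s : ℝ, HasDerivAt
        (fun s => f s - ∑ j ∈ Finset.range (N+1),
          (s ^ j / (j.factorial : ℝ)) • iteratedDeriv j f 0)
        (deriv f s - ∑ j ∈ Finset.range N,
          (s ^ j / (j.factorial : ℝ)) • iteratedDeriv j (deriv f) 0) s := by
      intro s
      have h1 : HasDerivAt f (deriv f s) s := (hfd s).hasDerivAt
      have h3 : HasDerivAt (fun s : ℝ => ∑ j ∈ Finset.range (N+1),
            (s ^ j / (j.factorial : ℝ)) • iteratedDeriv j f 0)
          (∑ j ∈ Finset.range (N+1),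
            (((j:ℝ) * s ^ (j-1)) / (j.factorial : ℝ)) • iteratedDeriv j f 0) s := by
        apply HasDerivAt.fun_sum
        intro j _
        exact ((hasDerivAt_pow j s).div_const _).smul_const _
      have heq : (∑ j ∈ Finset.range (N+1),
            (((j:ℝ) * s ^ (j-1)) / (j.factorial : ℝ)) • iteratedDeriv j f 0)
          = ∑ j ∈ Finset.range N, (s ^ j / (j.factorial : ℝ)) • iteratedDeriv j (deriv f) 0 := by
        rw [Finset.sum_range_succ']
        simp only [Nat.cast_zero, zero_mul, zero_div, zero_smul, add_zero]
        refine Finset.sum_congr rfl fun j _ => ?_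
        rw [iteratedDeriv_succ']
        congr 1
        rw [Nat.add_sub_cancel, Nat.factorial_succ]
        have hj : ((j.factorial : ℝ)) ≠ 0 := Nat.cast_ne_zero.mpr j.factorial_pos.ne'
        push_cast
        field_simp
      rw [← heq]
      exact h1.sub h3
    have hg0 : (f 0 - ∑ j ∈ Finset.range (N+1),
        ((0:ℝ) ^ j / (j.factorial : ℝ)) • iteratedDeriv j f 0) = 0 := by
      rw [Finset.sum_range_succ']
      simp
    have hcont : Continuous (fun s : ℝ => deriv f s - ∑ j ∈ Finset.range N,
        (s ^ j / (j.factorial : ℝ)) • iteratedDeriv j (deriv f) 0) := by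
      refine (hf.continuous_deriv (by exact_mod_cast le_top)).sub ?_
      exact continuous_finset_sum _ fun j _ => ((continuous_pow j).div_const _).smul continuous_const
    have hint : (f t - ∑ j ∈ Finset.range (N+1),
          (t ^ j / (j.factorial : ℝ)) • iteratedDeriv j f 0)
        = ∫ s in (0:ℝ)..t, (deriv f s - ∑ j ∈ Finset.range N,
            (s ^ j / (j.factorial : ℝ)) • iteratedDeriv j (deriv f) 0) := by
      rw [intervalIntegral.integral_eq_sub_of_hasDerivAt (fun s _ => hder s)
        (hcont.intervalIntegrable 0 t)]
      rw [hg0, sub_zero]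
    have hNf : ((N.factorial : ℝ)) ≠ 0 := Nat.cast_ne_zero.mpr N.factorial_pos.ne'
    have hC0 : 0 ≤ C := le_trans (norm_nonneg _) (hC t ⟨ht, le_refl t⟩)
    rw [hint]
    calc ‖∫ s in (0:ℝ)..t, (deriv f s - ∑ j ∈ Finset.range N,
            (s ^ j / (j.factorial : ℝ)) • iteratedDeriv j (deriv f) 0)‖
        ≤ |∫ s in (0:ℝ)..t, C * s ^ N / N.factorial| := by
          apply intervalIntegral.norm_integral_le_abs_of_norm_le
          · rw [MeasureTheory.ae_restrict_iff' measurableSet_uIoc]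
            apply MeasureTheory.ae_of_all
            intro s hs
            rw [Set.uIoc_of_le ht] at hs
            refine ih (deriv f) s C hf' hs.1.le fun y hy => ?_
            rw [← iteratedDeriv_succ']
            exact hC y ⟨hy.1, hy.2.trans hs.2⟩
          · exact ((continuous_const.mul (continuous_pow N)).div_const _).intervalIntegrable 0 t
      _ = ∫ s in (0:ℝ)..t, C * s ^ N / N.factorial := by
          refine abs_of_nonneg (intervalIntegral.integral_nonneg ht fun s hs => ?_)
          exact div_nonneg (mul_nonneg hC0 (pow_nonneg hs.1 N)) (Nat.cast_nonneg _)
      _ = C * t ^ (N+1) / (N+1).factorial := by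
          have h : ∀ s : ℝ, C * s ^ N / (N.factorial : ℝ) = (C / N.factorial) * s ^ N :=
            fun s => by ring
          simp_rw [h]
          rw [intervalIntegral.integral_const_mul, integral_pow]
          have hfs : (((N+1).factorial : ℕ) : ℝ) = ((N:ℝ)+1) * N.factorial := by
            rw [Nat.factorial_succ]; push_cast; ring
          rw [hfs, zero_pow (Nat.succ_ne_zero N), sub_zero]
          rw [div_mul_div_comm, mul_comm ((N.factorial:ℝ))]

theorem stmt_8 (α ν : ℝ) (hα : α ∈ Set.Ioo (0:ℝ) 2) (hν : 0 < ν)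
    (N : ℕ) (hN : 0 < N) (r u : ℝ) (hr : 0 < r) (hu : 0 < u) :
    ‖((1 + Complex.exp (π * α / 2 * Complex.I) * (r : ℂ) ^ (-(α : ℂ)) * (u : ℂ) ^ (α : ℂ))
          ^ (-(ν : ℂ))
        - ∑ j ∈ Finset.range N, ((-1 : ℂ) ^ j / (Nat.factorial j)) *
            ((Real.Gamma (ν + j) / Real.Gamma ν : ℝ) : ℂ) *
            Complex.exp (π * α * j / 2 * Complex.I) *
            (r : ℂ) ^ (-(α : ℂ) * j) * (u : ℂ) ^ ((α : ℂ) * j))‖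
      ≤ (Real.Gamma (N + ν) / (Nat.factorial N * Real.Gamma ν *
          Real.sin (π * α / 2) ^ ((ν : ℝ) + N))) * r ^ (-(α * N)) * u ^ (α * N) := by
  obtain ⟨hα0, hα2⟩ := hα
  set θ : ℝ := π * α / 2 with hθ
  have hθ0 : 0 < θ := by
    have := Real.pi_pos
    rw [hθ]; positivity
  have hθπ : θ < π := by
    have := Real.pi_pos
    rw [hθ]; nlinarith
  have hsin : 0 < Real.sin θ := Real.sin_pos_of_pos_of_lt_pi hθ0 hθπ
  set w : ℂ := Complex.exp ((θ:ℂ) * Complex.I) with hwdef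
  have hw_re : w.re = Real.cos θ := Complex.exp_ofReal_mul_I_re θ
  have hw_im : w.im = Real.sin θ := Complex.exp_ofReal_mul_I_im θ
  have hw_abs : ‖w‖ = 1 := Complex.norm_exp_ofReal_mul_I θ
  -- slit plane membership
  have hmem : ∀ s : ℝ, 1 + (s:ℂ) * w ∈ Complex.slitPlane := by
    intro s
    rcases eq_or_ne s 0 with h | h
    · subst h
      rw [Complex.mem_slitPlane_iff]
      left; simp
    · rw [Complex.mem_slitPlane_iff]
      right
      have him : (1 + (s:ℂ) * w).im = s * Real.sin θ := by
        simp [Complex.add_im, Complex.mul_im, hw_im]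
      rw [him]
      exact mul_ne_zero h hsin.ne'
  have hne : ∀ s : ℝ, (1 + (s:ℂ) * w) ≠ 0 := fun s => Complex.slitPlane_ne_zero (hmem s)
  -- derivative of the basic family
  have hderivF : ∀ (c : ℂ) (s : ℝ), HasDerivAt (fun s : ℝ => (1 + (s:ℂ) * w) ^ c)
      (c * (1 + (s:ℂ) * w) ^ (c - 1) * w) s := by
    intro c s
    have hg : HasDerivAt (fun s : ℝ => 1 + (s:ℂ) * w) w s := by
      simpa using ((Complex.ofRealCLM.hasDerivAt (x := s)).mul_const w).const_add 1
    have h0 : HasDerivAt (fun z : ℂ => z ^ c) (c * (1 + (s:ℂ) * w) ^ (c - 1)) (1 + (s:ℂ) * w) :=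
      (Complex.hasStrictDerivAt_cpow_const (hmem s)).hasDerivAt
    have h1 := (h0.hasFDerivAt.restrictScalars ℝ).comp_hasDerivAt s hg
    exact h0.comp s hg
  -- smoothness
  have hsmooth : ∀ c : ℂ, ContDiff ℝ ∞ (fun s : ℝ => (1 + (s:ℂ) * w) ^ c) := by
    intro c
    rw [contDiff_iff_contDiffAt]
    intro s
    have h1 : AnalyticAt ℂ (fun z : ℂ => z ^ c) (1 + (s:ℂ) * w) :=
      analyticAt_id.cpow analyticAt_const (hmem s)
    have h2 : ContDiffAt ℝ ∞ (fun z : ℂ => z ^ c) (1 + (s:ℂ) * w) :=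
      (h1.contDiffAt).restrict_scalars ℝ
    have h3 : ContDiffAt ℝ ∞ (fun s : ℝ => 1 + (s:ℂ) * w) s := by
      apply ContDiffAt.add
      · exact contDiffAt_const
      · exact (Complex.ofRealCLM.contDiff.contDiffAt).mul contDiffAt_const
    exact h2.comp s h3
  -- iterated derivatives
  have hD : ∀ (j : ℕ), iteratedDeriv j (fun s : ℝ => (1 + (s:ℂ) * w) ^ (-(ν:ℂ))) =
      fun s : ℝ => (∏ i ∈ Finset.range j, (-(ν:ℂ) - i)) *
        ((1 + (s:ℂ) * w) ^ (-(ν:ℂ) - j) * w ^ j) := by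
    intro j
    induction j with
    | zero => funext s; simp
    | succ j ih =>
      funext s
      rw [iteratedDeriv_succ, ih]
      have hda : HasDerivAt (fun s : ℝ => (∏ i ∈ Finset.range j, (-(ν:ℂ) - i)) *
          ((1 + (s:ℂ) * w) ^ (-(ν:ℂ) - j) * w ^ j))
          ((∏ i ∈ Finset.range j, (-(ν:ℂ) - i)) *
            (((-(ν:ℂ) - j) * (1 + (s:ℂ) * w) ^ ((-(ν:ℂ) - j) - 1) * w) * w ^ j)) s :=
        (((hderivF (-(ν:ℂ) - j) s).mul_const (w ^ j)).const_mul _)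
      rw [hda.deriv]
      have hexp : ((-(ν:ℂ) - j) - 1) = -(ν:ℂ) - ((j+1 : ℕ) : ℂ) := by push_cast; ring
      rw [hexp, Finset.prod_range_succ]
      push_cast
      ring
  -- basic positivity facts
  set t : ℝ := r ^ (-α) * u ^ α with htdef
  have ht0 : 0 < t := mul_pos (Real.rpow_pos_of_pos hr _) (Real.rpow_pos_of_pos hu _)
  have hΓν : 0 < Real.Gamma ν := Real.Gamma_pos_of_pos hν
  have hP_pos : ∀ j : ℕ, 0 < ∏ i ∈ Finset.range j, (ν + (i:ℝ)) :=
    fun j => Finset.prod_pos fun i _ => by positivity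
  have hΓ : ∀ j : ℕ, Real.Gamma (ν + j) = Real.Gamma ν * ∏ i ∈ Finset.range j, (ν + (i:ℝ)) := by
    intro j
    induction j with
    | zero => simp
    | succ j ih =>
      have hne' : ν + (j:ℝ) ≠ 0 := by positivity
      have hstep : ν + ((j+1 : ℕ):ℝ) = (ν + j) + 1 := by push_cast; ring
      rw [hstep, Real.Gamma_add_one hne', ih, Finset.prod_range_succ]
      ring
  have hPj : ∀ j : ℕ, Real.Gamma (ν + (j:ℝ)) / Real.Gamma ν = ∏ i ∈ Finset.range j, (ν + (i:ℝ)) :=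
    fun j => by rw [hΓ j, mul_div_cancel_left₀ _ hΓν.ne']
  have hA : ∀ j : ℕ, (∏ i ∈ Finset.range j, (-(ν:ℂ) - i)) =
      (-1:ℂ)^j * (((∏ i ∈ Finset.range j, (ν + (i:ℝ))) : ℝ) : ℂ) := by
    intro j
    rw [Complex.ofReal_prod, show ((-1:ℂ))^j = ∏ _i ∈ Finset.range j, (-1:ℂ) by simp,
      ← Finset.prod_mul_distrib]
    refine Finset.prod_congr rfl fun i _ => ?_
    push_cast
    ring
  have habs_ge : ∀ y : ℝ, 0 ≤ y → Real.sin θ ≤ ‖1 + (y:ℂ) * w‖ := by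
    intro y hy
    have h2 : Real.sin θ ^ 2 ≤ Complex.normSq (1 + (y:ℂ) * w) := by
      have hre : (1 + (y:ℂ) * w).re = 1 + y * Real.cos θ := by
        simp [Complex.add_re, Complex.mul_re, hw_re, hw_im]
      have him : (1 + (y:ℂ) * w).im = y * Real.sin θ := by
        simp [Complex.add_im, Complex.mul_im, hw_im]
      rw [Complex.normSq_apply, hre, him]
      nlinarith [Real.sin_sq_add_cos_sq θ, sq_nonneg (y + Real.cos θ)]
    calc Real.sin θ = Real.sqrt (Real.sin θ ^ 2) := (Real.sqrt_sq hsin.le).symm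
      _ ≤ Real.sqrt (Complex.normSq (1 + (y:ℂ) * w)) := Real.sqrt_le_sqrt h2
      _ = ‖1 + (y:ℂ) * w‖ := by rw [Complex.norm_def]
  have hbound : ∀ y ∈ Set.Icc (0:ℝ) t,
      ‖iteratedDeriv N (fun s : ℝ => (1 + (s:ℂ) * w) ^ (-(ν:ℂ))) y‖
      ≤ (∏ i ∈ Finset.range N, (ν + (i:ℝ))) * Real.sin θ ^ (-(ν + (N:ℝ))) := by
    intro y hy
    simp only [hD N]
    rw [norm_mul, norm_mul, norm_pow, hw_abs, one_pow, mul_one]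
    have hAabs : ‖∏ i ∈ Finset.range N, (-(ν:ℂ) - i)‖
        = ∏ i ∈ Finset.range N, (ν + (i:ℝ)) := by
      rw [hA N, norm_mul, norm_pow, Complex.norm_real, Real.norm_of_nonneg (hP_pos N).le]
      simp
    rw [hAabs]
    have hcexp : (-(ν:ℂ) - (N:ℕ)) = ((-(ν + (N:ℝ)) : ℝ) : ℂ) := by push_cast; ring
    rw [hcexp, Complex.norm_cpow_real]
    have h1 : ‖1 + (y:ℂ) * w‖ ^ (-(ν + (N:ℝ))) ≤ Real.sin θ ^ (-(ν + (N:ℝ))) :=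
      Real.rpow_le_rpow_of_nonpos hsin (habs_ge y hy.1) (neg_nonpos.mpr (by positivity))
    exact mul_le_mul_of_nonneg_left h1 (hP_pos N).le
  have htj : ∀ j : ℕ, r ^ ((-α) * (j:ℝ)) * u ^ (α * (j:ℝ)) = t ^ j := by
    intro j
    rw [Real.rpow_mul hr.le, Real.rpow_mul hu.le, Real.rpow_natCast, Real.rpow_natCast,
      ← mul_pow, ← htdef]
  have hsum : ∀ j ∈ Finset.range N, ((-1:ℂ)^j / ((Nat.factorial j : ℕ) : ℂ)) *
      ((Real.Gamma (ν + j) / Real.Gamma ν : ℝ) : ℂ) *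
      Complex.exp (↑π * ↑α * (j:ℂ) / 2 * Complex.I) *
      (r:ℂ) ^ (-(α:ℂ) * (j:ℂ)) * (u:ℂ) ^ ((α:ℂ) * (j:ℂ))
      = (t ^ j / (j.factorial : ℝ)) •
        iteratedDeriv j (fun s : ℝ => (1 + (s:ℂ) * w) ^ (-(ν:ℂ))) 0 := by
    intro j _
    have hrj : ((r:ℂ)) ^ (-(α:ℂ) * (j:ℂ)) = ((r ^ ((-α) * (j:ℝ)) : ℝ) : ℂ) := by
      rw [Complex.ofReal_cpow hr.le]
      norm_cast
    have huj : ((u:ℂ)) ^ ((α:ℂ) * (j:ℂ)) = ((u ^ (α * (j:ℝ)) : ℝ) : ℂ) := by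
      rw [Complex.ofReal_cpow hu.le]
      norm_cast
    have hej : (↑π * ↑α * (j:ℂ) / 2 * Complex.I) = (j:ℂ) * ((θ:ℂ) * Complex.I) := by
      rw [hθ]; push_cast; ring
    rw [hD j]
    simp only [Complex.ofReal_zero, zero_mul, add_zero, Complex.one_cpow]
    rw [hPj j, hej, Complex.exp_nat_mul, ← hwdef, hrj, huj, hA j, Complex.real_smul]
    rw [mul_assoc _ (((r ^ ((-α) * (j:ℝ)) : ℝ)):ℂ) _, ← Complex.ofReal_mul, htj j]
    push_cast
    ring
  have hmain : (1 + Complex.exp (↑π * ↑α / 2 * Complex.I) * (r:ℂ) ^ (-(α:ℂ)) * (u:ℂ) ^ (α:ℂ))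
      = 1 + (t:ℂ) * w := by
    have harg : (↑π * ↑α / 2 * Complex.I : ℂ) = (θ:ℂ) * Complex.I := by
      rw [hθ]; push_cast; ring
    have hrc : ((r:ℂ)) ^ (-(α:ℂ)) = ((r ^ (-α) : ℝ) : ℂ) := by
      rw [Complex.ofReal_cpow hr.le]; norm_cast
    have huc : ((u:ℂ)) ^ ((α:ℂ)) = ((u ^ α : ℝ) : ℂ) := by
      rw [Complex.ofReal_cpow hu.le]
    rw [harg, hrc, huc, ← hwdef, htdef]
    push_cast
    ring
  have hRHS : Real.Gamma ((N:ℝ) + ν) / ((Nat.factorial N : ℝ) * Real.Gamma ν *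
        Real.sin θ ^ (ν + (N:ℝ))) * r ^ (-(α * (N:ℝ))) * u ^ (α * (N:ℝ))
      = ((∏ i ∈ Finset.range N, (ν + (i:ℝ))) * Real.sin θ ^ (-(ν + (N:ℝ)))) * t ^ N /
        (Nat.factorial N : ℝ) := by
    have h1 : Real.Gamma ((N:ℝ) + ν) = Real.Gamma ν * ∏ i ∈ Finset.range N, (ν + (i:ℝ)) := by
      rw [add_comm]; exact hΓ N
    have h2 : r ^ (-(α * (N:ℝ))) * u ^ (α * (N:ℝ)) = t ^ N := by
      rw [show -(α * (N:ℝ)) = (-α) * (N:ℝ) by ring]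
      exact htj N
    have hS : 0 < Real.sin θ ^ (ν + (N:ℝ)) := Real.rpow_pos_of_pos hsin _
    have hNf : ((Nat.factorial N : ℕ) : ℝ) ≠ 0 := Nat.cast_ne_zero.mpr N.factorial_pos.ne'
    rw [h1, mul_assoc, h2, Real.rpow_neg hsin.le]
    field_simp
  rw [hmain, Finset.sum_congr rfl hsum, hRHS]
  exact taylor_norm_bound N _ t _ (hsmooth _) ht0.le hbound
end

section
/- Let α ∈ (0,2), ν > 0, n ≥ 1, r > 0, and suppose q(r) = (r^((2-n)/2)/(2^((n-2)/2) π^((n+2)/2))) ∫₀^∞ [sin(ν·arg(1+e^(iπα/2)u^α)) / |1+e^(iπα/2)u^α|^ν] K_{(n-2)/2}(ru) u^(n/2) du with αν ≤ 2 and n = 1. Then q(r) = (1/π) ∫₀^∞ [sin(ν·arg(1+e^(iπα/2)u^α)) / |1+e^(iπα/2)u^α|^ν] e^(-ru) du, and consequently q is completely monotonic on (0,∞). -/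
open MeasureTheory Real Complex Set

/-- The modified Bessel function of the second kind, via its standard integral
representation `K_μ(z) = ∫₀^∞ e^{-z cosh t} cosh(μ t) dt` (valid for `z > 0`). -/
noncomputable def besselK (μ z : ℝ) : ℝ :=
  ∫ t in Set.Ioi (0:ℝ), Real.exp (-z * Real.cosh t) * Real.cosh (μ * t)

lemma besselK_neg_half {z : ℝ} (hz : 0 < z) :
    besselK (-(1:ℝ)/2) z = Real.sqrt (π / (2*z)) * Real.exp (-z) := by
  have hcosh : ∀ t : ℝ, Real.cosh t = 1 + 2 * Real.sinh (t/2) ^ 2 := by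
    intro t
    rw [show t = 2*(t/2) by ring, Real.cosh_two_mul, Real.cosh_sq']
    ring
  have hgfull : Integrable (fun s : ℝ => 2 * Real.exp (-z * (1 + 2*s^2))) := by
    have : (fun s : ℝ => 2 * Real.exp (-z * (1 + 2*s^2)))
        = fun s : ℝ => (2 * Real.exp (-z)) * Real.exp (-(2*z) * s^2) := by
      funext s; rw [mul_assoc, ← Real.exp_add]; ring_nf
    rw [this]
    exact (integrable_exp_neg_mul_sq (by linarith)).const_mul _
  have key : (∫ t in Ioi (0:ℝ), ((fun s => 2 * Real.exp (-z * (1 + 2*s^2))) ∘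
        (fun t => Real.sinh (t/2))) t * (Real.cosh (t/2) / 2))
      = ∫ s in Ioi ((fun t => Real.sinh (t/2)) 0), 2 * Real.exp (-z * (1 + 2*s^2)) := by
    apply MeasureTheory.integral_comp_mul_deriv_Ioi
    · exact (Real.continuous_sinh.comp (continuous_id.div_const 2)).continuousOn
    · apply Filter.tendsto_atTop_mono' Filter.atTop ((Filter.eventually_ge_atTop (0:ℝ)).mono ?_)
        (Filter.Tendsto.atTop_div_const two_pos Filter.tendsto_id)
      intro x hx
      simp only [id_eq]
      exact Real.self_le_sinh_iff.mpr (by linarith)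
    · intro x _
      have h1 : HasDerivAt (fun t : ℝ => Real.sinh (t/2)) (Real.cosh (x/2) / 2) x := by
        simpa [div_eq_mul_inv, mul_comm, Function.comp_def] using
          ((Real.hasDerivAt_sinh (x/2)).comp x ((hasDerivAt_id x).div_const 2))
      exact h1.hasDerivWithinAt
    · exact (Continuous.continuousOn (by continuity))
    · exact hgfull.integrableOn
    · -- integrability of exp(-z cosh t) cosh(t/2) on Ici 0
      have hmaj : IntegrableOn (fun t : ℝ => Real.exp (1/(4*z)) * Real.exp (-(z/4) * t^2))
          (Ici (0:ℝ)) := ((integrable_exp_neg_mul_sq (by linarith)).const_mul _).integrableOn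
      apply Integrable.mono' hmaj
      · exact (Continuous.aestronglyMeasurable (by continuity))
      · rw [ae_restrict_iff' measurableSet_Ici]
        refine Filter.Eventually.of_forall (fun t ht => ?_)
        have ht0 : (0:ℝ) ≤ t := ht
        have hb1 : 1 + t^2/2 ≤ Real.cosh t := by
          rw [hcosh t]
          have h1 : t/2 ≤ Real.sinh (t/2) := Real.self_le_sinh_iff.mpr (by linarith)
          nlinarith [sq_nonneg (Real.sinh (t/2) - t/2)]
        have hb2 : Real.cosh (t/2) ≤ Real.exp (t/2) := by
          rw [Real.cosh_eq]
          have : Real.exp (-(t/2)) ≤ Real.exp (t/2) := Real.exp_le_exp.mpr (by linarith)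
          linarith
        have hcpos : 0 < Real.cosh (t/2) := Real.cosh_pos _
        rw [Real.norm_eq_abs]
        simp only [Function.comp_apply]
        rw [_root_.abs_of_nonneg (mul_nonneg (by positivity) (by linarith [hcpos]))]
        calc 2 * Real.exp (-z * (1 + 2 * Real.sinh (t/2)^2)) * (Real.cosh (t/2) / 2)
            = Real.exp (-z * Real.cosh t) * Real.cosh (t/2) := by
              rw [hcosh t]; ring
          _ ≤ Real.exp (-z * (1 + t^2/2)) * Real.exp (t/2) := by
              apply mul_le_mul _ hb2 hcpos.le (Real.exp_nonneg _)
              exact Real.exp_le_exp.mpr (by nlinarith)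
          _ = Real.exp (-z * (1 + t^2/2) + t/2) := (Real.exp_add _ _).symm
          _ ≤ Real.exp (1/(4*z)) * Real.exp (-(z/4) * t^2) := by
              rw [← Real.exp_add]
              apply Real.exp_le_exp.mpr
              have key2 : t/2 - z/4*t^2 ≤ 1/(4*z) := by
                rw [le_div_iff₀ (by linarith : (0:ℝ) < 4*z)]
                nlinarith [sq_nonneg (z*t - 1)]
              nlinarith [mul_nonneg hz.le (sq_nonneg t)]
  have hlhs : besselK (-(1:ℝ)/2) z
      = ∫ t in Ioi (0:ℝ), ((fun s => 2 * Real.exp (-z * (1 + 2*s^2))) ∘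
        (fun t => Real.sinh (t/2))) t * (Real.cosh (t/2) / 2) := by
    unfold besselK
    congr 1
    funext t
    simp only [Function.comp_apply]
    rw [show (-(1:ℝ)/2 * t) = -(t/2) by ring, Real.cosh_neg, hcosh t]
    ring
  rw [hlhs, key]
  rw [show ((fun t : ℝ => Real.sinh (t/2)) 0) = 0 by norm_num]
  have : (fun s : ℝ => 2 * Real.exp (-z * (1 + 2*s^2)))
      = fun s : ℝ => (2 * Real.exp (-z)) * Real.exp (-(2*z) * s^2) := by
    funext s; rw [mul_assoc, ← Real.exp_add]; ring_nf
  rw [show (∫ s in Ioi (0:ℝ), 2 * Real.exp (-z * (1 + 2*s^2)))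
      = ∫ s in Ioi (0:ℝ), (2 * Real.exp (-z)) * Real.exp (-(2*z) * s^2) by rw [this]]
  rw [MeasureTheory.integral_const_mul, integral_gaussian_Ioi]
  rw [show π/(2*z) = π/(2*z) from rfl]
  ring

lemma arg_facts {θ t : ℝ} (hθ0 : 0 < θ) (hθπ : θ < π) (ht : 0 < t) :
    0 ≤ (1 + Complex.exp (θ*Complex.I) * (t:ℂ)).arg ∧
    (1 + Complex.exp (θ*Complex.I) * (t:ℂ)).arg ≤ θ ∧
    Real.sin θ ≤ ‖1 + Complex.exp (θ*Complex.I) * (t:ℂ)‖ := by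
  set z : ℂ := 1 + Complex.exp (θ*Complex.I) * (t:ℂ) with hzdef
  have hsθ : 0 < Real.sin θ := Real.sin_pos_of_pos_of_lt_pi hθ0 hθπ
  have hre : z.re = 1 + Real.cos θ * t := by
    simp [hzdef, Complex.add_re, Complex.mul_re, Complex.exp_ofReal_mul_I_re,
      Complex.exp_ofReal_mul_I_im]
  have him : z.im = Real.sin θ * t := by
    simp [hzdef, Complex.add_im, Complex.mul_im, Complex.exp_ofReal_mul_I_re,
      Complex.exp_ofReal_mul_I_im]
  have him0 : 0 < z.im := by rw [him]; positivity
  have hz0 : z ≠ 0 := fun h => by simp [h] at him0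
  have habs2 : Real.sin θ ^ 2 ≤ ‖z‖ ^ 2 := by
    rw [Complex.sq_norm, Complex.normSq_apply, hre, him]
    nlinarith [Real.sin_sq_add_cos_sq θ, sq_nonneg (Real.cos θ + t)]
  have habs : Real.sin θ ≤ ‖z‖ := by
    have := Real.sqrt_le_sqrt habs2
    rwa [Real.sqrt_sq hsθ.le, Real.sqrt_sq (norm_nonneg z)] at this
  have habspos : 0 < ‖z‖ := lt_of_lt_of_le hsθ habs
  have harg0 : 0 ≤ z.arg := Complex.arg_nonneg_iff.mpr him0.le
  have hargπ : z.arg < π := Complex.arg_lt_pi_iff.mpr (Or.inr him0.ne')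
  refine ⟨harg0, ?_, habs⟩
  by_contra hlt
  push_neg at hlt
  have hsin : Real.sin (θ - z.arg) < 0 :=
    Real.sin_neg_of_neg_of_neg_pi_lt (by linarith) (by linarith)
  have hcalc : Real.sin (θ - z.arg) = Real.sin θ / ‖z‖ := by
    rw [Real.sin_sub, Complex.cos_arg hz0, Complex.sin_arg, hre, him]
    field_simp
    ring
  rw [hcalc] at hsin
  have : 0 < Real.sin θ / ‖z‖ := by positivity
  linarith

theorem stmt_19 (α ν : ℝ) (hα : α ∈ Set.Ioo (0:ℝ) 2) (hν : 0 < ν) (hαν : α * ν ≤ 2)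
    (q : ℝ → ℝ)
    (hq : ∀ r : ℝ, 0 < r →
      q r = (r ^ ((1 : ℝ) / 2) / (2 ^ (-(1 : ℝ) / 2) * π ^ ((3 : ℝ) / 2))) *
        ∫ u in Set.Ioi (0:ℝ),
          (Real.sin (ν * Complex.arg (1 + Complex.exp (π * α / 2 * Complex.I) * (u : ℂ) ^ (α : ℂ))) /
            ‖1 + Complex.exp (π * α / 2 * Complex.I) * (u : ℂ) ^ (α : ℂ)‖ ^ ν) *
          besselK (-(1 : ℝ) / 2) (r * u) * u ^ ((1 : ℝ) / 2)) :
    (∀ r : ℝ, 0 < r →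
      q r = (1 / π) *
        ∫ u in Set.Ioi (0:ℝ),
          (Real.sin (ν * Complex.arg (1 + Complex.exp (π * α / 2 * Complex.I) * (u : ℂ) ^ (α : ℂ))) /
            ‖1 + Complex.exp (π * α / 2 * Complex.I) * (u : ℂ) ^ (α : ℂ)‖ ^ ν) *
          Real.exp (-r * u)) ∧
    (∀ k : ℕ, ∀ r : ℝ, 0 < r → 0 ≤ (-1 : ℝ) ^ k * iteratedDeriv k q r) := by
  obtain ⟨hα0, hα2⟩ := hα
  have hπ : (0:ℝ) < π := Real.pi_pos
  set θ : ℝ := π * α / 2 with hθdef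
  have hθ0 : 0 < θ := by rw [hθdef]; positivity
  have hθπ : θ < π := by rw [hθdef]; nlinarith
  have hsθ : 0 < Real.sin θ := Real.sin_pos_of_pos_of_lt_pi hθ0 hθπ
  set g : ℝ → ℝ := fun u =>
    Real.sin (ν * Complex.arg (1 + Complex.exp (π * α / 2 * Complex.I) * (u : ℂ) ^ (α : ℂ))) /
      ‖1 + Complex.exp (π * α / 2 * Complex.I) * (u : ℂ) ^ (α : ℂ)‖ ^ ν with hgdef
  set C : ℝ := 1 / Real.sin θ ^ ν with hCdef
  have hC0 : 0 < C := by rw [hCdef]; positivity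
  -- rewrite the complex number in a convenient form
  have hwkey : ∀ u : ℝ, 0 < u →
      (1 + Complex.exp (π * α / 2 * Complex.I) * (u:ℂ) ^ (α:ℂ))
        = 1 + Complex.exp ((θ:ℝ) * Complex.I) * ((u ^ α : ℝ):ℂ) := by
    intro u hu
    rw [Complex.ofReal_cpow hu.le, show ((θ:ℝ):ℂ) = ↑π * ↑α / 2 by rw [hθdef]; push_cast; ring]
  have hfacts : ∀ u : ℝ, 0 < u →
      0 ≤ Complex.arg (1 + Complex.exp (π * α / 2 * Complex.I) * (u:ℂ) ^ (α:ℂ)) ∧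
      Complex.arg (1 + Complex.exp (π * α / 2 * Complex.I) * (u:ℂ) ^ (α:ℂ)) ≤ θ ∧
      Real.sin θ ≤ ‖1 + Complex.exp (π * α / 2 * Complex.I) * (u:ℂ) ^ (α:ℂ)‖ := by
    intro u hu
    rw [hwkey u hu]
    exact arg_facts hθ0 hθπ (Real.rpow_pos_of_pos hu α)
  have hg_nonneg : ∀ u : ℝ, 0 < u → 0 ≤ g u := by
    intro u hu
    obtain ⟨h0, hθle, habs⟩ := hfacts u hu
    rw [hgdef]
    apply div_nonneg _ (Real.rpow_nonneg (norm_nonneg _) ν)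
    apply Real.sin_nonneg_of_nonneg_of_le_pi (mul_nonneg hν.le h0)
    calc ν * Complex.arg _ ≤ ν * θ := mul_le_mul_of_nonneg_left hθle hν.le
      _ ≤ π := by rw [hθdef]; nlinarith
  have hg_bound : ∀ u : ℝ, 0 < u → |g u| ≤ C := by
    intro u hu
    obtain ⟨h0, hθle, habs⟩ := hfacts u hu
    rw [hgdef, hCdef]
    simp only
    rw [abs_div, _root_.abs_of_nonneg (Real.rpow_nonneg (norm_nonneg _) ν)]
    exact div_le_div₀ zero_le_one
      (abs_le.mpr ⟨Real.neg_one_le_sin _, Real.sin_le_one _⟩)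
      (Real.rpow_pos_of_pos hsθ ν)
      (Real.rpow_le_rpow hsθ.le habs hν.le)
  have habs_pos : ∀ u : ℝ, 0 < u →
      0 < ‖1 + Complex.exp (π * α / 2 * Complex.I) * (u:ℂ) ^ (α:ℂ)‖ :=
    fun u hu => lt_of_lt_of_le hsθ (hfacts u hu).2.2
  -- continuity and measurability
  have hwcont : ContinuousOn
      (fun u : ℝ => 1 + Complex.exp (π * α / 2 * Complex.I) * (u:ℂ) ^ (α:ℂ)) (Ioi 0) := by
    have c1 : ContinuousOn (fun u : ℝ => u ^ α) (Ioi 0) := fun u hu =>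
      (Real.continuousAt_rpow_const u α (Or.inl (ne_of_gt hu))).continuousWithinAt
    have c2 : ContinuousOn
        (fun u : ℝ => 1 + Complex.exp ((θ:ℝ) * Complex.I) * ((u ^ α : ℝ):ℂ)) (Ioi 0) :=
      continuousOn_const.add (continuousOn_const.mul
        (Complex.continuous_ofReal.comp_continuousOn c1))
    exact c2.congr (fun u hu => hwkey u hu)
  have hwim : ∀ u : ℝ, 0 < u →
      (1 + Complex.exp (π * α / 2 * Complex.I) * (u:ℂ) ^ (α:ℂ)) ∈ Complex.slitPlane := by
    intro u hu
    rw [hwkey u hu]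
    apply Complex.mem_slitPlane_iff.mpr
    right
    have : (1 + Complex.exp ((θ:ℝ) * Complex.I) * ((u ^ α : ℝ):ℂ)).im
        = Real.sin θ * u ^ α := by
      simp [Complex.add_im, Complex.mul_im, Complex.exp_ofReal_mul_I_re,
        Complex.exp_ofReal_mul_I_im]
    rw [this]
    positivity
  have hgcont : ContinuousOn g (Ioi 0) := by
    rw [hgdef]
    apply ContinuousOn.div
    · apply Real.continuous_sin.comp_continuousOn
      apply continuousOn_const.mul
      intro u hu
      exact ContinuousAt.comp_continuousWithinAt (g := Complex.arg)
        (f := fun u : ℝ => 1 + Complex.exp (π * α / 2 * Complex.I) * (u:ℂ) ^ (α:ℂ))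
        (Complex.continuousAt_arg (hwim u hu)) (hwcont u hu)
    · exact (continuous_norm.comp_continuousOn hwcont).rpow_const
        (fun u hu => Or.inr hν.le)
    · exact fun u hu => ne_of_gt (Real.rpow_pos_of_pos (habs_pos u hu) ν)
  have hgmeas : AEStronglyMeasurable g (volume.restrict (Ioi 0)) :=
    hgcont.aestronglyMeasurable measurableSet_Ioi
  -- integrability
  have hpowInt : ∀ (m : ℕ) (c : ℝ), 0 < c →
      IntegrableOn (fun u : ℝ => u ^ m * Real.exp (-c * u)) (Ioi 0) := by
    intro m c hc
    have h := integrableOn_rpow_mul_exp_neg_mul_rpow (p := 1) (s := (m:ℝ)) (b := c)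
      (lt_of_lt_of_le neg_one_lt_zero (Nat.cast_nonneg m)) zero_lt_one hc
    apply h.congr_fun ?_ measurableSet_Ioi
    intro x hx
    simp only [Real.rpow_natCast, Real.rpow_one]
  have hgint : ∀ (m : ℕ) (c : ℝ), 0 < c →
      IntegrableOn (fun u : ℝ => g u * u ^ m * Real.exp (-c * u)) (Ioi 0) := by
    intro m c hc
    apply Integrable.mono' (((hpowInt m c hc).const_mul C))
    · exact (hgmeas.mul (Continuous.aestronglyMeasurable (by fun_prop))).mul
        (Continuous.aestronglyMeasurable (by fun_prop))
    · rw [ae_restrict_iff' measurableSet_Ioi]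
      refine Filter.Eventually.of_forall fun u hu => ?_
      have hu0 : 0 < u := hu
      rw [Real.norm_eq_abs, abs_mul, abs_mul,
        _root_.abs_of_nonneg (pow_nonneg hu0.le m),
        _root_.abs_of_nonneg (Real.exp_nonneg _), mul_assoc]
      exact mul_le_mul_of_nonneg_right (hg_bound u hu0) (by positivity)
  -- the derivative of the Laplace-type transform
  have hderiv : ∀ (m : ℕ) (r : ℝ), 0 < r →
      HasDerivAt (fun x => ∫ u in Ioi (0:ℝ), g u * u ^ m * Real.exp (-x*u))
        (-∫ u in Ioi (0:ℝ), g u * u ^ (m+1) * Real.exp (-r*u)) r := by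
    intro m r hr
    have hhalf : 0 < r/2 := by linarith
    have main := hasDerivAt_integral_of_dominated_loc_of_deriv_le
      (μ := volume.restrict (Ioi (0:ℝ)))
      (F := fun x u => g u * u ^ m * Real.exp (-x*u))
      (F' := fun x u => g u * u ^ m * (-u * Real.exp (-x*u)))
      (x₀ := r)
      (bound := fun u => C * (u ^ (m+1) * Real.exp (-(r/2) * u)))
      (Metric.ball_mem_nhds r hhalf)
      (Filter.Eventually.of_forall fun x =>
        (hgmeas.mul (Continuous.aestronglyMeasurable (by fun_prop))).mul
          (Continuous.aestronglyMeasurable (by fun_prop)))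
      (hgint m r hr)
      ((hgmeas.mul (Continuous.aestronglyMeasurable (by fun_prop))).mul
        (Continuous.aestronglyMeasurable (by fun_prop)))
      ?hbound
      ((hpowInt (m+1) (r/2) hhalf).const_mul C)
      ?hdiff
    case hbound =>
      rw [ae_restrict_iff' measurableSet_Ioi]
      refine Filter.Eventually.of_forall fun u hu x hx => ?_
      have hu0 : 0 < u := hu
      have hx2 : r/2 < x := by
        rw [Metric.mem_ball, Real.dist_eq] at hx
        have := abs_lt.mp hx
        linarith [this.1]
      rw [Real.norm_eq_abs, abs_mul, abs_mul,
        _root_.abs_of_nonneg (pow_nonneg hu0.le m),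
        _root_.abs_of_nonpos (by nlinarith [Real.exp_pos (-x*u)] : -u * Real.exp (-x*u) ≤ 0)]
      have hexp : Real.exp (-x*u) ≤ Real.exp (-(r/2)*u) :=
        Real.exp_le_exp.mpr (by nlinarith)
      calc |g u| * u ^ m * -(-u * Real.exp (-x*u))
          = |g u| * (u ^ m * u * Real.exp (-x*u)) := by ring
        _ ≤ C * (u ^ m * u * Real.exp (-(r/2)*u)) := by
            apply mul_le_mul (hg_bound u hu0) _ (by positivity) hC0.le
            exact mul_le_mul_of_nonneg_left hexp (by positivity)
        _ = C * (u ^ (m+1) * Real.exp (-(r/2)*u)) := by ring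
    case hdiff =>
      refine Filter.Eventually.of_forall fun u x hx => ?_
      have h1 : HasDerivAt (fun x : ℝ => -x*u) (-u) x := by
        simpa using ((hasDerivAt_id x).neg.mul_const u)
      have h2 := h1.exp
      have h3 := h2.const_mul (g u * u ^ m)
      convert h3 using 1
      rfl
      ring
    have heq : (fun u : ℝ => g u * u ^ m * (-u * Real.exp (-r*u)))
        = fun u : ℝ => -(g u * u ^ (m+1) * Real.exp (-r*u)) := by
      funext u; ring
    have hd := main.2
    rw [heq, integral_neg] at hd
    exact hd
  -- the first conjunct
  have hq1 : ∀ r : ℝ, 0 < r → q r = (1/π) * ∫ u in Ioi (0:ℝ), g u * Real.exp (-r*u) := by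
    intro r hr
    rw [hq r hr]
    have hIeq : (∫ u in Set.Ioi (0:ℝ),
          (Real.sin (ν * Complex.arg (1 + Complex.exp (π * α / 2 * Complex.I) * (u : ℂ) ^ (α : ℂ))) /
            ‖1 + Complex.exp (π * α / 2 * Complex.I) * (u : ℂ) ^ (α : ℂ)‖ ^ ν) *
          besselK (-(1 : ℝ) / 2) (r * u) * u ^ ((1 : ℝ) / 2))
        = ∫ u in Ioi (0:ℝ), Real.sqrt (π/(2*r)) * (g u * Real.exp (-r*u)) := by
      apply setIntegral_congr_fun measurableSet_Ioi
      intro u hu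
      have hu0 : 0 < u := hu
      have hkey : Real.sqrt (π/(2*(r*u))) * u ^ ((1:ℝ)/2) = Real.sqrt (π/(2*r)) := by
        rw [← Real.sqrt_eq_rpow, ← Real.sqrt_mul (by positivity) u]
        congr 1
        field_simp
      simp only [hgdef]
      rw [besselK_neg_half (mul_pos hr hu0), ← hkey]
      simp only [neg_mul]
      ring
    rw [hIeq, integral_const_mul, ← mul_assoc]
    congr 1
    -- constant computation
    have hππ : π ^ ((3:ℝ)/2) = π * π ^ ((1:ℝ)/2) := by
      rw [show (3:ℝ)/2 = 1 + 1/2 by norm_num, Real.rpow_add hπ, Real.rpow_one]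
    have h2 : (2:ℝ) ^ (-(1:ℝ)/2) * 2 ^ ((1:ℝ)/2) = 1 := by
      rw [← Real.rpow_add two_pos]; norm_num
    rw [Real.sqrt_eq_rpow, Real.div_rpow hπ.le (by positivity),
      Real.mul_rpow (by norm_num) hr.le, hππ]
    have hr0 : (0:ℝ) < r ^ ((1:ℝ)/2) := Real.rpow_pos_of_pos hr _
    have hπ0 : (0:ℝ) < π ^ ((1:ℝ)/2) := Real.rpow_pos_of_pos hπ _
    have h20 : (0:ℝ) < (2:ℝ) ^ (-(1:ℝ)/2) := Real.rpow_pos_of_pos two_pos _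
    have h21 : (0:ℝ) < (2:ℝ) ^ ((1:ℝ)/2) := Real.rpow_pos_of_pos two_pos _
    field_simp
    rw [neg_div] at h2
    exact h2.symm
  -- iterated derivatives
  have hiter : ∀ (m : ℕ), ∀ r : ℝ, 0 < r →
      iteratedDeriv m q r = 1/π * (-1:ℝ)^m * ∫ u in Ioi (0:ℝ), g u * u ^ m * Real.exp (-r*u) := by
    intro m
    induction m with
    | zero =>
      intro r hr
      rw [iteratedDeriv_zero, hq1 r hr]
      simp only [pow_zero, mul_one, one_mul]
    | succ m ih =>
      intro r hr
      rw [iteratedDeriv_succ]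
      have hev : iteratedDeriv m q =ᶠ[nhds r]
          fun x => 1/π * (-1:ℝ)^m * ∫ u in Ioi (0:ℝ), g u * u ^ m * Real.exp (-x*u) := by
        filter_upwards [Ioi_mem_nhds hr] with x hx using ih x hx
      rw [hev.deriv_eq]
      have hd := (hderiv m r hr).const_mul (1/π * (-1:ℝ)^m)
      rw [hd.deriv]
      ring
  refine ⟨fun r hr => hq1 r hr, fun k r hr => ?_⟩
  rw [hiter k r hr]
  have h1 : ((-1:ℝ)^k) * ((-1:ℝ)^k) = 1 := by rw [← mul_pow]; norm_num
  have hFnn : 0 ≤ ∫ u in Ioi (0:ℝ), g u * u ^ k * Real.exp (-r*u) :=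
    setIntegral_nonneg measurableSet_Ioi fun u hu =>
      mul_nonneg (mul_nonneg (hg_nonneg u hu) (pow_nonneg (le_of_lt hu) k)) (Real.exp_nonneg _)
  calc (-1:ℝ)^k * (1/π * (-1:ℝ)^k * ∫ u in Ioi (0:ℝ), g u * u ^ k * Real.exp (-r*u))
      = ((-1:ℝ)^k * (-1:ℝ)^k) * (1/π * ∫ u in Ioi (0:ℝ), g u * u ^ k * Real.exp (-r*u)) := by
        ring
    _ = 1/π * ∫ u in Ioi (0:ℝ), g u * u ^ k * Real.exp (-r*u) := by rw [h1, one_mul]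
    _ ≥ 0 := mul_nonneg (by positivity) hFnn
end
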